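/- Let Σ and Σ' be real positive definite n×n matrices. Then the following are equivalent: (i) there exists a permutation π of Fin n with Σ' i j = Σ (π i) (π j) for all i, j (Σ and Σ' are permutationally similar); (ii) for every x ∈ ℝⁿ, ∑_{σ ∈ Perm(Fin n)} exp(−x_σᵀ Σ⁻¹ x_σ) = ∑_{σ ∈ Perm(Fin n)} exp(−x_σᵀ (Σ')⁻¹ x_σ), where x_σ denotes the vector with (x_σ)ᵢ = x (σ i). -/

import Mathlib

open Matrix Filter Topology

section helpers

lemma exp_coeffs_zero : ∀ (V : Finset ℝ) (w : ℝ → ℝ),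
    (∀ s : ℝ, 0 ≤ s → ∑ c ∈ V, w c * Real.exp (-(s * c)) = 0) →
    ∀ c ∈ V, w c = 0 := by
  intro V
  induction V using Finset.strongInduction with
  | _ V ih =>
    intro w h c hc
    have hne : V.Nonempty := ⟨c, hc⟩
    set m := V.min' hne with hm
    have hwm : w m = 0 := by
      have hlim : Tendsto (fun s => ∑ c ∈ V, w c * Real.exp (-(s * (c - m))))
          atTop (𝓝 (w m)) := by
        have : ∀ s : ℝ, ∑ c ∈ V, w c * Real.exp (-(s * (c - m)))
            = w m * Real.exp (-(s * (m - m)))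
              + ∑ c ∈ V.erase m, w c * Real.exp (-(s * (c - m))) := by
          intro s
          exact (Finset.add_sum_erase V _ (V.min'_mem hne)).symm
        simp only [this]
        have h0 : Tendsto (fun s : ℝ => w m * Real.exp (-(s * (m - m)))) atTop (𝓝 (w m)) := by
          simp [sub_self]
        have h1 : Tendsto (fun s : ℝ => ∑ c ∈ V.erase m, w c * Real.exp (-(s * (c - m))))
            atTop (𝓝 0) := by
          have : (0 : ℝ) = ∑ c ∈ V.erase m, (0 : ℝ) := by simp
          rw [this]
          refine tendsto_finset_sum _ ?_
          intro d hd
          have hdm : m < d := by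
            rcases Finset.mem_erase.mp hd with ⟨hne', hdV⟩
            exact lt_of_le_of_ne (V.min'_le d hdV) (Ne.symm hne')
          have : Tendsto (fun s : ℝ => s * (d - m)) atTop atTop :=
            Tendsto.atTop_mul_const (by linarith) tendsto_id
          have := (Real.tendsto_exp_neg_atTop_nhds_zero.comp this)
          have := this.const_mul (w d)
          simpa using this
        simpa using h0.add h1
      have hzero : Tendsto (fun s => ∑ c ∈ V, w c * Real.exp (-(s * (c - m))))
          atTop (𝓝 0) := by
        have hev : (fun s => ∑ c ∈ V, w c * Real.exp (-(s * (c - m))))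
            =ᶠ[atTop] (fun _ => (0:ℝ)) := by
          filter_upwards [eventually_ge_atTop (0:ℝ)] with s hs
          have : ∀ d ∈ V, w d * Real.exp (-(s * (d - m)))
              = Real.exp (s * m) * (w d * Real.exp (-(s * d))) := by
            intro d _
            rw [mul_comm (Real.exp (s*m)), mul_assoc, ← Real.exp_add]
            ring_nf
          rw [Finset.sum_congr rfl this, ← Finset.mul_sum, h s hs, mul_zero]
        exact Tendsto.congr' hev.symm tendsto_const_nhds
      exact tendsto_nhds_unique hlim hzero
    rcases eq_or_ne c m with rfl | hcm
    · exact hwm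
    · refine ih (V.erase m) (Finset.erase_ssubset (V.min'_mem hne)) w ?_ c
        (Finset.mem_erase.mpr ⟨hcm, hc⟩)
      intro s hs
      have := h s hs
      rw [← Finset.add_sum_erase _ _ (V.min'_mem hne)] at this
      rw [hwm] at this
      linarith

lemma symm_of_quadform {n : ℕ} (M N : Matrix (Fin n) (Fin n) ℝ)
    (hM : M.IsSymm) (hN : N.IsSymm)
    (h : ∀ x : Fin n → ℝ, x ⬝ᵥ (M *ᵥ x) = x ⬝ᵥ (N *ᵥ x)) : M = N := by
  ext i j
  have key : ∀ (u v : Fin n → ℝ),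
      u ⬝ᵥ (M *ᵥ v) + v ⬝ᵥ (M *ᵥ u) = u ⬝ᵥ (N *ᵥ v) + v ⬝ᵥ (N *ᵥ u) := by
    intro u v
    have h1 := h (u + v)
    have h2 := h u
    have h3 := h v
    simp only [mulVec_add, dotProduct_add, add_dotProduct] at h1
    linarith
  have := key (Pi.single i 1) (Pi.single j 1)
  simp only [mulVec_single, single_dotProduct] at this
  simp only [mul_one, one_mul, Pi.smul_apply, MulOpposite.op_one, one_smul, Matrix.col_apply] at this
  have e1 := hM.apply i j
  have e2 := hN.apply i j
  linarith

lemma quadform_submatrix {n : ℕ} (A : Matrix (Fin n) (Fin n) ℝ) (e : Equiv.Perm (Fin n))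
    (x : Fin n → ℝ) :
    x ⬝ᵥ ((A.submatrix e e) *ᵥ x) = (x ∘ e.symm) ⬝ᵥ (A *ᵥ (x ∘ e.symm)) := by
  rw [submatrix_mulVec_equiv]
  show (∑ i, x i * ((A *ᵥ (x ∘ e.symm)) (e i))) = _
  refine (Finset.sum_congr rfl fun i _ => ?_).trans
    (Equiv.sum_comp e fun a => (x ∘ e.symm) a * (A *ᵥ (x ∘ e.symm)) a)
  simp

lemma quad_eval {n : ℕ} (M : Matrix (Fin n) (Fin n) ℝ) (v : Fin n → ℝ) :
    v ⬝ᵥ (M *ᵥ v) = ∑ i, ∑ j, M i j * v i * v j := by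
  simp only [dotProduct, mulVec, Finset.mul_sum]
  exact Finset.sum_congr rfl fun i _ => Finset.sum_congr rfl fun j _ => by ring

lemma posdef_inv_isSymm {n : ℕ} {S : Matrix (Fin n) (Fin n) ℝ} (hS : S.PosDef) :
    (S⁻¹).IsSymm := by
  have h := hS.inv.isHermitian
  ext i j
  simpa using congrFun (congrFun h i) j

open MvPolynomial in
lemma exists_perm_forall {n : ℕ} (A B : Matrix (Fin n) (Fin n) ℝ)
    (h : ∀ x : Fin n → ℝ, ∃ τ : Equiv.Perm (Fin n),
      x ⬝ᵥ (B *ᵥ x) = (x ∘ τ) ⬝ᵥ (A *ᵥ (x ∘ τ))) :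
    ∃ τ : Equiv.Perm (Fin n), ∀ x : Fin n → ℝ,
      x ⬝ᵥ (B *ᵥ x) = (x ∘ τ) ⬝ᵥ (A *ᵥ (x ∘ τ)) := by
  set P : Equiv.Perm (Fin n) → MvPolynomial (Fin n) ℝ := fun τ =>
    (∑ i, ∑ j, C (B i j) * X i * X j) - (∑ i, ∑ j, C (A i j) * X (τ i) * X (τ j)) with hP
  have hev : ∀ (τ : Equiv.Perm (Fin n)) (x : Fin n → ℝ),
      eval x (P τ) = x ⬝ᵥ (B *ᵥ x) - (x ∘ τ) ⬝ᵥ (A *ᵥ (x ∘ τ)) := by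
    intro τ x
    rw [quad_eval, quad_eval, hP]
    simp [Function.comp]
  have hprod : (∏ τ : Equiv.Perm (Fin n), P τ) = 0 := by
    apply MvPolynomial.funext (q := 0)
    intro x
    rw [map_prod, map_zero]
    obtain ⟨τ, hτ⟩ := h x
    exact Finset.prod_eq_zero (Finset.mem_univ τ) (by rw [hev, hτ, sub_self])
  rw [Finset.prod_eq_zero_iff] at hprod
  obtain ⟨τ, _, hτ⟩ := hprod
  refine ⟨τ, fun x => ?_⟩
  have := hev τ x
  rw [hτ, map_zero] at this
  linarith

end helpers

theorem stmt_14 (n : ℕ) (S S' : Matrix (Fin n) (Fin n) ℝ)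
    (hS : S.PosDef) (hS' : S'.PosDef) :
    (∃ π : Equiv.Perm (Fin n), ∀ i j, S' i j = S (π i) (π j)) ↔
      ∀ x : Fin n → ℝ,
        ∑ σ : Equiv.Perm (Fin n),
            Real.exp (-((x ∘ σ) ⬝ᵥ (S⁻¹ *ᵥ (x ∘ σ)))) =
          ∑ σ : Equiv.Perm (Fin n),
            Real.exp (-((x ∘ σ) ⬝ᵥ (S'⁻¹ *ᵥ (x ∘ σ)))) := by
  constructor
  · rintro ⟨π, hπ⟩ x
    have hsub : S' = S.submatrix π π := by ext i j; exact hπ i j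
    have hinv : S'⁻¹ = S⁻¹.submatrix π π := by rw [hsub, inv_submatrix_equiv]
    rw [hinv]
    have hterm : ∀ σ : Equiv.Perm (Fin n),
        (x ∘ σ) ⬝ᵥ ((S⁻¹.submatrix π π) *ᵥ (x ∘ σ))
          = (x ∘ ⇑(σ * π⁻¹)) ⬝ᵥ (S⁻¹ *ᵥ (x ∘ ⇑(σ * π⁻¹))) := by
      intro σ
      have hc : (x ∘ ⇑σ) ∘ ⇑π.symm = x ∘ ⇑(σ * π⁻¹) := by
        funext i; rfl
      rw [quadform_submatrix, hc]
    calc ∑ σ : Equiv.Perm (Fin n), Real.exp (-((x ∘ σ) ⬝ᵥ (S⁻¹ *ᵥ (x ∘ σ))))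
        = ∑ σ : Equiv.Perm (Fin n),
            Real.exp (-((x ∘ ⇑(σ * π⁻¹)) ⬝ᵥ (S⁻¹ *ᵥ (x ∘ ⇑(σ * π⁻¹))))) := by
          exact (Equiv.sum_comp (Equiv.mulRight π⁻¹)
            (fun σ => Real.exp (-((x ∘ ⇑σ) ⬝ᵥ (S⁻¹ *ᵥ (x ∘ ⇑σ)))))).symm
      _ = _ := by
          refine Finset.sum_congr rfl fun σ _ => ?_
          rw [hterm σ]
  · intro h
    have key : ∀ x : Fin n → ℝ, ∃ τ : Equiv.Perm (Fin n),
        x ⬝ᵥ (S'⁻¹ *ᵥ x) = (x ∘ τ) ⬝ᵥ (S⁻¹ *ᵥ (x ∘ τ)) := by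
      intro x
      set a : Equiv.Perm (Fin n) → ℝ := fun σ => (x ∘ σ) ⬝ᵥ (S⁻¹ *ᵥ (x ∘ σ)) with ha
      set b : Equiv.Perm (Fin n) → ℝ := fun σ => (x ∘ σ) ⬝ᵥ (S'⁻¹ *ᵥ (x ∘ σ)) with hb
      have hs : ∀ s : ℝ, 0 ≤ s →
          ∑ σ : Equiv.Perm (Fin n), Real.exp (-(s * a σ))
            = ∑ σ : Equiv.Perm (Fin n), Real.exp (-(s * b σ)) := by
        intro s hs0
        have hx := h (Real.sqrt s • x)
        have hsc : ∀ (M : Matrix (Fin n) (Fin n) ℝ) (σ : Equiv.Perm (Fin n)),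
            ((Real.sqrt s • x) ∘ σ) ⬝ᵥ (M *ᵥ ((Real.sqrt s • x) ∘ σ))
              = s * ((x ∘ σ) ⬝ᵥ (M *ᵥ (x ∘ σ))) := by
          intro M σ
          have hcomp : (Real.sqrt s • x) ∘ ⇑σ = Real.sqrt s • (x ∘ ⇑σ) := rfl
          rw [hcomp, mulVec_smul, smul_dotProduct, dotProduct_smul, smul_eq_mul, smul_eq_mul,
            ← mul_assoc, Real.mul_self_sqrt hs0]
        simp only [hsc] at hx
        exact hx
      classical
      set V : Finset ℝ := (Finset.univ.image a) ∪ (Finset.univ.image b) with hV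
      set w : ℝ → ℝ := fun c =>
        ((Finset.univ.filter (fun σ => a σ = c)).card : ℝ)
          - ((Finset.univ.filter (fun σ => b σ = c)).card : ℝ) with hw
      have hgroup : ∀ (f : Equiv.Perm (Fin n) → ℝ), Finset.univ.image f ⊆ V → ∀ s : ℝ,
          ∑ σ : Equiv.Perm (Fin n), Real.exp (-(s * f σ))
            = ∑ c ∈ V, ((Finset.univ.filter (fun σ => f σ = c)).card : ℝ)
                * Real.exp (-(s * c)) := by
        intro f hf s
        rw [Finset.sum_comp (fun c => Real.exp (-(s * c))) f]
        refine (Finset.sum_subset hf ?_).trans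
          (Finset.sum_congr rfl fun c _ => nsmul_eq_mul _ _)
        intro c _ hc
        have hemp : (Finset.univ.filter (fun σ => f σ = c)) = ∅ := by
          rw [Finset.filter_eq_empty_iff]
          intro σ _ hσ
          exact hc (hσ ▸ Finset.mem_image_of_mem f (Finset.mem_univ σ))
        rw [hemp]
        simp
      have hsum0 : ∀ s : ℝ, 0 ≤ s → ∑ c ∈ V, w c * Real.exp (-(s * c)) = 0 := by
        intro s hs0
        have ha' := hgroup a Finset.subset_union_left s
        have hb' := hgroup b Finset.subset_union_right s
        have : ∑ c ∈ V, w c * Real.exp (-(s * c))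
            = (∑ c ∈ V, ((Finset.univ.filter (fun σ => a σ = c)).card : ℝ)
                  * Real.exp (-(s * c)))
              - ∑ c ∈ V, ((Finset.univ.filter (fun σ => b σ = c)).card : ℝ)
                  * Real.exp (-(s * c)) := by
          rw [← Finset.sum_sub_distrib]
          exact Finset.sum_congr rfl fun c _ => by rw [hw]; ring
        rw [this, ← ha', ← hb', hs s hs0, sub_self]
      have hwz := exp_coeffs_zero V w hsum0
      have hbV : b 1 ∈ V :=
        Finset.mem_union_right _ (Finset.mem_image_of_mem b (Finset.mem_univ 1))
      have hw0 := hwz (b 1) hbV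
      rw [hw, sub_eq_zero] at hw0
      have hcard : (Finset.univ.filter (fun σ => a σ = b 1)).card
          = (Finset.univ.filter (fun σ => b σ = b 1)).card := Nat.cast_injective hw0
      have hbpos : 0 < (Finset.univ.filter (fun σ => b σ = b 1)).card :=
        Finset.card_pos.mpr ⟨1, by simp⟩
      rw [← hcard] at hbpos
      obtain ⟨τ, hτ⟩ := Finset.card_pos.mp hbpos
      rw [Finset.mem_filter] at hτ
      refine ⟨τ, ?_⟩
      have hb1 : b 1 = x ⬝ᵥ (S'⁻¹ *ᵥ x) := by
        rw [hb]
        simp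
      rw [← hb1, ← hτ.2, ha]
    obtain ⟨τ, hτ⟩ := exists_perm_forall S⁻¹ S'⁻¹ key
    have hq : ∀ x : Fin n → ℝ, x ⬝ᵥ (S'⁻¹ *ᵥ x)
        = x ⬝ᵥ ((S⁻¹.submatrix τ.symm τ.symm) *ᵥ x) := by
      intro x
      rw [quadform_submatrix]
      simpa using hτ x
    have hsymm1 : (S'⁻¹).IsSymm := posdef_inv_isSymm hS'
    have hsymm2 : (S⁻¹.submatrix τ.symm τ.symm).IsSymm := by
      have h1 := posdef_inv_isSymm hS
      unfold Matrix.IsSymm at *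
      rw [transpose_submatrix, h1]
    have heq : S'⁻¹ = S⁻¹.submatrix τ.symm τ.symm := symm_of_quadform _ _ hsymm1 hsymm2 hq
    have heq2 : S'⁻¹ = (S.submatrix τ.symm τ.symm)⁻¹ := by rw [inv_submatrix_equiv]; exact heq
    have hdet : IsUnit (S.submatrix τ.symm τ.symm).det := by
      rw [det_submatrix_equiv_self]
      exact hS.det_pos.ne'.isUnit
    have hfin : S' = S.submatrix τ.symm τ.symm := by
      have h2 := congrArg Inv.inv heq2
      rwa [Matrix.nonsing_inv_nonsing_inv _ (hS'.det_pos.ne'.isUnit),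
        Matrix.nonsing_inv_nonsing_inv _ hdet] at h2
    exact ⟨τ.symm, fun i j => by rw [hfin]; rfl⟩
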